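/- arXiv:1203.6262 — 2 statements merged into one kernel-verified Lean document; each statement's English description precedes it below -/
import Mathlib

section
/- Let A ∈ M₃⊗M₃ be separable. Then the linear span of the set of partial conjugates {x̄⊗y : x⊗y ∈ P[A]} equals the range of the partial transpose A^Γ. -/
open Matrix BigOperators
open scoped ComplexOrder

/-- Index set for `M₃ ⊗ M₃ ≅ M₉`: pairs `(i,k)` with `i,k ∈ Fin 3`. -/
abbrev Idx : Type := Fin 3 × Fin 3

/-- `M₃ ⊗ M₃`, identified with 9×9 complex matrices. -/
abbrev M9 : Type := Matrix Idx Idx ℂ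

/-- Vectors in `ℂ³ ⊗ ℂ³ ≅ ℂ⁹`. -/
abbrev V9 : Type := Idx → ℂ

/-- The product vector `x ⊗ y`, with entries `(x⊗y)(i,k) = x i * y k`. -/
def prodVec (x y : Fin 3 → ℂ) : V9 := fun p => x p.1 * y p.2

/-- Entrywise complex conjugate of a vector in `ℂ³`. -/
def conjVec (x : Fin 3 → ℂ) : Fin 3 → ℂ := fun i => (starRingEnd ℂ) (x i)

/-- The rank-one matrix `z z*`. -/
def rankOne (z : V9) : M9 := Matrix.vecMulVec z (fun p => (starRingEnd ℂ) (z p))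

/-- The partial transpose: `A^Γ((i,k),(j,l)) = A((j,k),(i,l))`. -/
def ptrans (A : M9) : M9 := fun p q => A (q.1, p.2) (p.1, q.2)

/-- The range of a matrix `A`, as a subspace of `ℂ⁹`. -/
noncomputable def MatRange (A : M9) : Submodule ℂ V9 := LinearMap.range A.mulVecLin

/-- `A` is separable: a finite sum of `(x⊗y)(x⊗y)*` over product vectors. -/
def IsSep (A : M9) : Prop :=
  ∃ (n : ℕ) (x y : Fin n → Fin 3 → ℂ),
    A = ∑ ι : Fin n, rankOne (prodVec (x ι) (y ι))

/-- The convex cone `V₁` of all separable matrices. -/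
def V1 : Set M9 := {A | IsSep A}

/-- `A` is PPT: both `A` and `A^Γ` are positive semidefinite. -/
def IsPPT (A : M9) : Prop := A.PosSemidef ∧ (ptrans A).PosSemidef

/-- The convex cone `𝕋` of all PPT matrices. -/
def Tcone : Set M9 := {A | IsPPT A}

/-- `F` is a face of the convex set `C`. -/
def IsFaceOf (F C : Set M9) : Prop :=
  F ⊆ C ∧ Convex ℝ F ∧
    ∀ x ∈ C, ∀ y ∈ C, ∀ t : ℝ, 0 < t → t < 1 →
      (1 - t) • x + t • y ∈ F → x ∈ F ∧ y ∈ F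

/-- The smallest face of `C` containing `A`. -/
def smallestFace (C : Set M9) (A : M9) : Set M9 := ⋂₀ {F | IsFaceOf F C ∧ A ∈ F}

/-- `P[A]`: product vectors `z` with `z z* ∈ V₁[A]`. -/
def Pvecs (A : M9) : Set V9 :=
  {z | (∃ x y : Fin 3 → ℂ, z = prodVec x y) ∧ rankOne z ∈ smallestFace V1 A}

/-- `Q[A]`: product vectors `x⊗y` with `x⊗y ∈ range A` and `x̄⊗y ∈ range A^Γ`. -/
def Qvecs (A : M9) : Set V9 :=
  {z | ∃ x y : Fin 3 → ℂ, z = prodVec x y ∧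
    prodVec x y ∈ MatRange A ∧ prodVec (conjVec x) y ∈ MatRange (ptrans A)}

/-- The face `𝕋[A]` of the PPT cone determined by `A`. -/
def TFace (A : M9) : Set M9 :=
  {B | IsPPT B ∧ MatRange B ≤ MatRange A ∧ MatRange (ptrans B) ≤ MatRange (ptrans A)}

/-- `x` is an interior point of the convex set `C`. -/
def IsInteriorPt (x : M9) (C : Set M9) : Prop :=
  x ∈ C ∧ ∀ y ∈ C, ∃ t : ℝ, 1 < t ∧ (1 - t) • y + t • x ∈ C

/-- The matrix `A[a,b,c]` of the paper. -/
def Amat (a b c : ℝ) : M9 := fun p q =>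
  if p = q then
    (if p.1 = p.2 then (a : ℂ) else if p.2 = p.1 + 1 then (c : ℂ) else (b : ℂ))
  else if p.1 = p.2 ∧ q.1 = q.2 then 1 else 0

section Helpers

lemma rankOne_mulVec (z u : V9) :
    rankOne z *ᵥ u = ((fun p => (starRingEnd ℂ) (z p)) ⬝ᵥ u) • z := by
  funext p
  simp only [rankOne, mulVec, dotProduct, vecMulVec_apply, Pi.smul_apply, smul_eq_mul]
  rw [Finset.sum_mul]
  exact Finset.sum_congr rfl fun q _ => by ring

lemma sum_mulVec {ι : Type*} (s : Finset ι) (f : ι → M9) (u : V9) :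
    (∑ i ∈ s, f i) *ᵥ u = ∑ i ∈ s, (f i) *ᵥ u := by
  funext p
  simp only [mulVec, dotProduct, Matrix.sum_apply, Finset.sum_apply, Finset.sum_mul]
  rw [Finset.sum_comm]


lemma ptrans_rankOne (x y : Fin 3 → ℂ) :
    ptrans (rankOne (prodVec x y)) = rankOne (prodVec (conjVec x) y) := by
  funext p q
  simp only [ptrans, rankOne, vecMulVec_apply, prodVec, conjVec, _root_.map_mul,
    Complex.conj_conj]
  ring

lemma ptrans_sum {ι : Type*} (s : Finset ι) (f : ι → M9) :
    ptrans (∑ i ∈ s, f i) = ∑ i ∈ s, ptrans (f i) := by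
  funext p q; simp [ptrans, Matrix.sum_apply]

lemma ptrans_smul (r : ℝ) (B : M9) : ptrans (r • B) = r • ptrans B := by
  funext p q; simp [ptrans]

lemma ptrans_add (B C : M9) : ptrans (B + C) = ptrans B + ptrans C := by
  funext p q; simp [ptrans]

lemma real_smul_matrix (r : ℝ) (B : M9) : r • B = (r : ℂ) • B := by
  funext p q
  simp [Matrix.smul_apply, Complex.real_smul]

lemma smul_rankOne_prod (c : ℝ) (hc : 0 ≤ c) (x y : Fin 3 → ℂ) :
    c • rankOne (prodVec x y)
      = rankOne (prodVec (fun i => (Real.sqrt c : ℂ) * x i) y) := by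
  funext p q
  simp only [Matrix.smul_apply, rankOne, vecMulVec_apply, prodVec, _root_.map_mul,
    Complex.conj_ofReal]
  rw [Complex.real_smul]
  have h : ((Real.sqrt c : ℂ)) * (Real.sqrt c : ℂ) = (c : ℂ) := by
    rw [← Complex.ofReal_mul, Real.mul_self_sqrt hc]
  ring_nf
  rw [show ((Real.sqrt c : ℂ)) ^ 2 = (c : ℂ) from by rw [sq]; exact h]
  ring

lemma isSep_of_fintype_sum {ι : Type} [Fintype ι] (x y : ι → Fin 3 → ℂ) :
    IsSep (∑ i : ι, rankOne (prodVec (x i) (y i))) := by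
  classical
  obtain ⟨e⟩ := Fintype.truncEquivFin ι |>.nonempty
  refine ⟨Fintype.card ι, x ∘ e.symm, y ∘ e.symm, ?_⟩
  rw [← Equiv.sum_comp e (fun i => rankOne (prodVec ((x ∘ e.symm) i) ((y ∘ e.symm) i)))]
  simp

lemma IsSep.smul {A : M9} (h : IsSep A) {c : ℝ} (hc : 0 ≤ c) : IsSep (c • A) := by
  obtain ⟨n, x, y, rfl⟩ := h
  rw [Finset.smul_sum]
  have : ∀ ι : Fin n, c • rankOne (prodVec (x ι) (y ι))
      = rankOne (prodVec (fun i => (Real.sqrt c : ℂ) * x ι i) (y ι)) :=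
    fun ι => smul_rankOne_prod c hc (x ι) (y ι)
  rw [Finset.sum_congr rfl (fun ι _ => this ι)]
  exact ⟨n, _, _, rfl⟩

lemma IsSep.add {A B : M9} (hA : IsSep A) (hB : IsSep B) : IsSep (A + B) := by
  obtain ⟨n, x, y, rfl⟩ := hA
  obtain ⟨m, x', y', rfl⟩ := hB
  have := isSep_of_fintype_sum (ι := Fin n ⊕ Fin m)
    (Sum.elim x x') (Sum.elim y y')
  rwa [Fintype.sum_sum_type] at this

lemma zero_isSep : IsSep (0 : M9) := ⟨0, ![], ![], by simp⟩

end Helpers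
section Core

lemma star_dot_conj (u v : V9) :
    (fun p => (starRingEnd ℂ) (u p)) ⬝ᵥ v
      = (starRingEnd ℂ) ((fun p => (starRingEnd ℂ) (v p)) ⬝ᵥ u) := by
  simp only [dotProduct, map_sum, _root_.map_mul, Complex.conj_conj]
  exact Finset.sum_congr rfl fun q _ => by ring

lemma dot_sum {ι : Type*} (s : Finset ι) (w : V9) (f : ι → V9) :
    w ⬝ᵥ (∑ i ∈ s, f i) = ∑ i ∈ s, w ⬝ᵥ f i := by
  simp only [dotProduct, Finset.sum_apply, Finset.mul_sum]
  rw [Finset.sum_comm]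

/-- The submodule of vectors `w` with `star w ⬝ᵥ u = 0`. -/
noncomputable def perpTo (u : V9) : Submodule ℂ V9 where
  carrier := {w | (fun p => (starRingEnd ℂ) (w p)) ⬝ᵥ u = 0}
  add_mem' := by
    intro a b ha hb
    simp only [Set.mem_setOf_eq, dotProduct, Pi.add_apply, _root_.map_add] at *
    simp only [add_mul, Finset.sum_add_distrib, ha, hb, add_zero]
  zero_mem' := by simp [dotProduct]
  smul_mem' := by
    intro c a ha
    simp only [Set.mem_setOf_eq, dotProduct, Pi.smul_apply, smul_eq_mul,
      _root_.map_mul] at *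
    simp only [mul_assoc, ← Finset.mul_sum, ha, mul_zero]

lemma mem_range_sum_rankOne {ι : Type} [Fintype ι] (v : ι → V9) (i : ι) :
    v i ∈ MatRange (∑ j : ι, rankOne (v j)) := by
  classical
  set M : M9 := ∑ j : ι, rankOne (v j) with hM
  set W : Submodule ℂ V9 := Submodule.span ℂ (Set.range v) with hW
  have hMap : ∀ u : V9, M *ᵥ u ∈ W := by
    intro u
    rw [hM, sum_mulVec]
    refine Submodule.sum_mem _ fun j _ => ?_
    rw [rankOne_mulVec]
    exact Submodule.smul_mem _ _ (Submodule.subset_span ⟨j, rfl⟩)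
  let f : W →ₗ[ℂ] W := (M.mulVecLin).restrict (p := W) (q := W)
    (fun u _ => hMap u)
  have hker : ∀ u : W, f u = 0 → u = 0 := by
    intro u hu
    have hMu : M *ᵥ (u : V9) = 0 := congrArg Subtype.val hu
    -- the coefficients star (v j) ⬝ᵥ u all vanish
    have hdot : ∀ j : ι, (fun p => (starRingEnd ℂ) (v j p)) ⬝ᵥ (u : V9) = 0 := by
      have h0 : (fun p => (starRingEnd ℂ) ((u : V9) p)) ⬝ᵥ (M *ᵥ (u : V9)) = 0 := by
        rw [hMu]; simp [dotProduct]
      rw [hM, sum_mulVec] at h0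
      have hexp : ∀ j : ι,
          (fun p => (starRingEnd ℂ) ((u : V9) p)) ⬝ᵥ (rankOne (v j) *ᵥ (u : V9))
            = (Complex.normSq ((fun p => (starRingEnd ℂ) (v j p)) ⬝ᵥ (u : V9)) : ℂ) := by
        intro j
        rw [rankOne_mulVec, dotProduct_smul]
        rw [star_dot_conj (u : V9) (v j)]
        rw [smul_eq_mul, mul_comm, ← Complex.normSq_eq_conj_mul_self]
      rw [dot_sum] at h0
      rw [Finset.sum_congr rfl (fun j _ => hexp j)] at h0
      have h0' : ∑ j : ι, Complex.normSq ((fun p => (starRingEnd ℂ) (v j p)) ⬝ᵥ (u : V9)) = 0 := by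
        exact_mod_cast h0
      intro j
      have := (Finset.sum_eq_zero_iff_of_nonneg
        (fun j _ => Complex.normSq_nonneg _)).mp h0' j (Finset.mem_univ j)
      exact Complex.normSq_eq_zero.mp this
    -- hence u is orthogonal to W, and u ∈ W, so u = 0
    have hWperp : W ≤ perpTo (u : V9) :=
      Submodule.span_le.mpr (by rintro _ ⟨j, rfl⟩; exact hdot j)
    have hu2 : (fun p => (starRingEnd ℂ) ((u : V9) p)) ⬝ᵥ (u : V9) = 0 := hWperp u.2
    have : (u : V9) = 0 := by
      have := dotProduct_star_self_eq_zero (v := (u : V9)) |>.mp ?_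
      · exact this
      · exact hu2
    exact Subtype.ext this
  have hinj : Function.Injective f := by
    rw [← LinearMap.ker_eq_bot, LinearMap.ker_eq_bot']
    intro u hu
    exact hker u hu
  have hsurj : Function.Surjective f := LinearMap.injective_iff_surjective.mp hinj
  obtain ⟨u, hu⟩ := hsurj ⟨v i, Submodule.subset_span ⟨i, rfl⟩⟩
  exact ⟨(u : V9), congrArg Subtype.val hu⟩

lemma matRange_sum_rankOne_le_span {ι : Type} [Fintype ι] (v : ι → V9) :
    MatRange (∑ j : ι, rankOne (v j)) ≤ Submodule.span ℂ (Set.range v) := by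
  rintro _ ⟨u, rfl⟩
  rw [Matrix.mulVecLin_apply, sum_mulVec]
  refine Submodule.sum_mem _ fun j _ => ?_
  rw [rankOne_mulVec]
  exact Submodule.smul_mem _ _ (Submodule.subset_span ⟨j, rfl⟩)

end Core
section Face

lemma real_smul_mulVec (r : ℝ) (P : M9) (u : V9) :
    (r • P) *ᵥ u = (r : ℂ) • (P *ᵥ u) := by
  rw [real_smul_matrix, smul_mulVec]

lemma isSep_subset_sum {n : ℕ} (x y : Fin n → Fin 3 → ℂ) (s : Finset (Fin n)) :
    IsSep (∑ ι ∈ s, rankOne (prodVec (x ι) (y ι))) := by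
  classical
  refine ⟨n, fun ι => if ι ∈ s then x ι else 0, y, ?_⟩
  have h : ∀ ι : Fin n,
      rankOne (prodVec (if ι ∈ s then x ι else 0) (y ι))
        = if ι ∈ s then rankOne (prodVec (x ι) (y ι)) else 0 := by
    intro ι
    split
    · rfl
    · funext p q; simp [prodVec, rankOne, vecMulVec_apply]
  rw [eq_comm, Finset.sum_congr rfl (fun ι _ => h ι), Finset.sum_ite_mem,
    Finset.univ_inter]

lemma face_mem_of_decomp {F : Set M9} (hF : IsFaceOf F V1) {A B C : M9}
    (hAF : A ∈ F) (hB : B ∈ V1) (hC : C ∈ V1) (hsum : A = B + C) : B ∈ F := by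
  have hAV : A ∈ V1 := hF.1 hAF
  have h0V : (0 : M9) ∈ V1 := zero_isSep
  have h2A : ((2:ℝ) • A) ∈ V1 := IsSep.smul hAV (by norm_num)
  have h2B : ((2:ℝ) • B) ∈ V1 := IsSep.smul hB (by norm_num)
  have h2C : ((2:ℝ) • C) ∈ V1 := IsSep.smul hC (by norm_num)
  have key0 : (0 : M9) ∈ F ∧ ((2:ℝ) • A) ∈ F := by
    refine hF.2.2 0 h0V ((2:ℝ) • A) h2A (1/2) (by norm_num) (by norm_num) ?_
    have : (1 - 1/2 : ℝ) • (0 : M9) + (1/2 : ℝ) • ((2:ℝ) • A) = A := by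
      rw [smul_zero, smul_smul]; norm_num
    rwa [this]
  have key : ((2:ℝ) • B) ∈ F ∧ ((2:ℝ) • C) ∈ F := by
    refine hF.2.2 _ h2B _ h2C (1/2) (by norm_num) (by norm_num) ?_
    have : (1 - 1/2 : ℝ) • ((2:ℝ) • B) + (1/2 : ℝ) • ((2:ℝ) • C) = A := by
      rw [smul_smul, smul_smul, hsum]; norm_num
    rwa [this]
  have := hF.2.1 key0.1 key.1 (by norm_num : (0:ℝ) ≤ 1/2)
    (by norm_num : (0:ℝ) ≤ 1/2) (by norm_num)
  rwa [smul_zero, zero_add, smul_smul, show (1/2 : ℝ) * 2 = 1 by norm_num,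
    one_smul] at this

lemma prodVec_smul_left (c : ℂ) (x y : Fin 3 → ℂ) :
    prodVec (fun i => c * x i) y = c • prodVec x y := by
  funext p; simp [prodVec, Pi.smul_apply, smul_eq_mul]; ring

lemma range_ptrans_le_of_combo {B C : M9} (hB : IsSep B) (hC : IsSep C) {s t : ℝ}
    (hs : 0 < s) (ht : 0 ≤ t) :
    MatRange (ptrans B) ≤ MatRange (ptrans (s • B + t • C)) := by
  obtain ⟨n, x, y, hBeq⟩ := hB
  obtain ⟨m, x', y', hCeq⟩ := hC
  set X : Fin n ⊕ Fin m → Fin 3 → ℂ :=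
    Sum.elim (fun ι i => ((Real.sqrt s : ℝ) : ℂ) * conjVec (x ι) i)
      (fun κ i => ((Real.sqrt t : ℝ) : ℂ) * conjVec (x' κ) i) with hX
  set Y : Fin n ⊕ Fin m → Fin 3 → ℂ := Sum.elim y y' with hY
  set v : Fin n ⊕ Fin m → V9 := fun j => prodVec (X j) (Y j) with hv
  have hM : ptrans (s • B + t • C) = ∑ j : Fin n ⊕ Fin m, rankOne (v j) := by
    rw [hBeq, hCeq, ptrans_add, ptrans_smul, ptrans_smul, ptrans_sum, ptrans_sum,
      Finset.smul_sum, Finset.smul_sum, Fintype.sum_sum_type]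
    congr 1
    · refine Finset.sum_congr rfl fun ι _ => ?_
      rw [ptrans_rankOne, smul_rankOne_prod s hs.le]
      rfl
    · refine Finset.sum_congr rfl fun κ _ => ?_
      rw [ptrans_rankOne, smul_rankOne_prod t ht]
      rfl
  have hw : ∀ ι : Fin n,
      prodVec (conjVec (x ι)) (y ι) ∈ MatRange (ptrans (s • B + t • C)) := by
    intro ι
    have h1 : v (Sum.inl ι) ∈ MatRange (∑ j : Fin n ⊕ Fin m, rankOne (v j)) :=
      mem_range_sum_rankOne v (Sum.inl ι)
    rw [← hM] at h1
    have h2 : v (Sum.inl ι)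
        = ((Real.sqrt s : ℝ) : ℂ) • prodVec (conjVec (x ι)) (y ι) := by
      rw [hv, hX, hY]
      exact prodVec_smul_left _ _ _
    have hc : ((Real.sqrt s : ℝ) : ℂ) ≠ 0 := by
      simp only [ne_eq, Complex.ofReal_eq_zero]
      exact (Real.sqrt_pos.mpr hs).ne'
    rw [h2] at h1
    have := Submodule.smul_mem (MatRange (ptrans (s • B + t • C)))
      (((Real.sqrt s : ℝ) : ℂ))⁻¹ h1
    rwa [smul_smul, inv_mul_cancel₀ hc, one_smul] at this
  have hPTB : ptrans B = ∑ ι : Fin n, rankOne (prodVec (conjVec (x ι)) (y ι)) := by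
    rw [hBeq, ptrans_sum]
    exact Finset.sum_congr rfl fun ι _ => ptrans_rankOne _ _
  rw [hPTB]
  refine le_trans (matRange_sum_rankOne_le_span _) (Submodule.span_le.mpr ?_)
  rintro _ ⟨ι, rfl⟩
  exact hw ι

lemma G_isFace (A : M9) :
    IsFaceOf {B | IsSep B ∧ MatRange (ptrans B) ≤ MatRange (ptrans A)} V1 := by
  refine ⟨fun B hB => hB.1, ?_, ?_⟩
  · -- convex
    intro B hB C hC a b ha hb hab
    refine ⟨IsSep.add (IsSep.smul hB.1 ha) (IsSep.smul hC.1 hb), ?_⟩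
    rintro _ ⟨u, rfl⟩
    rw [Matrix.mulVecLin_apply, ptrans_add, ptrans_smul, ptrans_smul, add_mulVec,
      real_smul_mulVec, real_smul_mulVec]
    refine Submodule.add_mem _ (Submodule.smul_mem _ _ ?_) (Submodule.smul_mem _ _ ?_)
    · exact hB.2 ⟨u, by rw [Matrix.mulVecLin_apply]⟩
    · exact hC.2 ⟨u, by rw [Matrix.mulVecLin_apply]⟩
  · -- face condition
    intro B hB C hC t ht0 ht1 hmem
    constructor
    · refine ⟨hB, le_trans ?_ hmem.2⟩
      exact range_ptrans_le_of_combo hB hC (by linarith) (by linarith)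
    · refine ⟨hC, le_trans ?_ hmem.2⟩
      have := range_ptrans_le_of_combo hC hB (s := t) (t := 1 - t)
        (by linarith) (by linarith)
      rwa [add_comm] at this

end Face
/-- For separable `A`, the span of the partial conjugates of `P[A]`
equals the range of `A^Γ`. -/
theorem stmt2 (A : M9) (hA : IsSep A) :
    Submodule.span ℂ
        {w : V9 | ∃ x y : Fin 3 → ℂ, prodVec x y ∈ Pvecs A ∧ w = prodVec (conjVec x) y} =
      MatRange (ptrans A) := by
  have hA' := hA
  obtain ⟨n, x, y, hAeq⟩ := hA'
  have hPT : ptrans A = ∑ ι : Fin n, rankOne (prodVec (conjVec (x ι)) (y ι)) := by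
    rw [hAeq, ptrans_sum]
    exact Finset.sum_congr rfl fun ι _ => ptrans_rankOne _ _
  apply le_antisymm
  · -- span ≤ range
    refine Submodule.span_le.mpr ?_
    rintro _ ⟨x₀, y₀, hz, rfl⟩
    have hzG : rankOne (prodVec x₀ y₀)
        ∈ {B | IsSep B ∧ MatRange (ptrans B) ≤ MatRange (ptrans A)} :=
      Set.mem_sInter.mp hz.2 _ ⟨G_isFace A, ⟨hA, le_refl _⟩⟩
    have hle := hzG.2
    rw [ptrans_rankOne] at hle
    have hmem : prodVec (conjVec x₀) y₀
        ∈ MatRange (rankOne (prodVec (conjVec x₀) y₀)) := by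
      have := mem_range_sum_rankOne (ι := Fin 1) (fun _ => prodVec (conjVec x₀) y₀) 0
      simpa using this
    exact hle hmem
  · -- range ≤ span
    rw [hPT]
    refine le_trans (matRange_sum_rankOne_le_span _) (Submodule.span_le.mpr ?_)
    rintro _ ⟨ι, rfl⟩
    refine Submodule.subset_span ⟨x ι, y ι, ?_, rfl⟩
    refine ⟨⟨x ι, y ι, rfl⟩, ?_⟩
    refine Set.mem_sInter.mpr ?_
    rintro F ⟨hFface, hAF⟩
    refine face_mem_of_decomp (C := ∑ κ ∈ Finset.univ.erase ι, rankOne (prodVec (x κ) (y κ)))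
      hFface hAF ?_ ?_ ?_
    · exact ⟨1, ![x ι], ![y ι], by simp⟩
    · exact isSep_subset_sum x y (Finset.univ.erase ι)
    · rw [hAeq, ← Finset.add_sum_erase _ _ (Finset.mem_univ ι)]
end

section
/- For nonnegative reals a, b, c, the matrix A[a,b,c] is PPT (i.e. both A[a,b,c] and its partial transpose A[a,b,c]^Γ are positive semidefinite) if and only if a ≥ 1 and bc ≥ 1. -/
open Matrix BigOperators
open scoped ComplexOrder

private lemma ofReal_nonneg' {x : ℝ} (h : 0 ≤ x) : (0 : ℂ) ≤ ((x : ℝ) : ℂ) := by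
  rw [← Complex.ofReal_zero, Complex.real_le_real]; exact h

set_option maxHeartbeats 2000000 in
private lemma rankOne_posSemidef' (z : V9) : (rankOne z).PosSemidef := by
  have h : rankOne z = (Matrix.replicateRow Unit (star z))ᴴ * (Matrix.replicateRow Unit (star z)) := by
    rw [conjTranspose_replicateRow, star_star, ← vecMulVec_eq Unit]
    rfl
  rw [h]
  exact posSemidef_conjTranspose_mul_self _

/-- Vector with `√c` at `p` and `1/√c` at `q`. -/
noncomputable def bvec (c : ℝ) (p q : Idx) : V9 := fun r =>
  if r = p then ((Real.sqrt c : ℝ) : ℂ) else if r = q then (((Real.sqrt c)⁻¹ : ℝ) : ℂ) else 0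

set_option maxHeartbeats 2000000 in
private lemma Amat_decomp (a b c : ℝ) : Amat a b c =
    Matrix.diagonal (fun p : Idx => if p.1 = p.2 then ((a - 1 : ℝ) : ℂ)
      else if p.2 = p.1 + 1 then (c : ℂ) else (b : ℂ))
    + rankOne (fun p : Idx => if p.1 = p.2 then 1 else 0) := by
  ext ⟨i, k⟩ ⟨j, l⟩
  fin_cases i <;> fin_cases k <;> fin_cases j <;> fin_cases l <;>
    simp [Amat, rankOne, vecMulVec, Matrix.diagonal, Prod.ext_iff] <;> push_cast <;> ring

set_option maxHeartbeats 2000000 in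
private lemma ptrans_Amat_decomp (a b c : ℝ) (hc : 0 < c) : ptrans (Amat a b c) =
    Matrix.diagonal (fun p : Idx => if p.1 = p.2 then ((a : ℝ) : ℂ)
      else if p.2 = p.1 + 1 then 0 else ((b - c⁻¹ : ℝ) : ℂ))
    + rankOne (bvec c (0,1) (1,0)) + rankOne (bvec c (1,2) (2,1))
    + rankOne (bvec c (2,0) (0,2)) := by
  have hs : Real.sqrt c * Real.sqrt c = c := Real.mul_self_sqrt hc.le
  have hs0 : Real.sqrt c ≠ 0 := by positivity
  have hsC : ((Real.sqrt c : ℝ) : ℂ) * ((Real.sqrt c : ℝ) : ℂ) = (c : ℂ) := by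
    exact_mod_cast congrArg (Complex.ofReal) hs
  ext ⟨i, k⟩ ⟨j, l⟩
  fin_cases i <;> fin_cases k <;> fin_cases j <;> fin_cases l <;>
    simp [Amat, ptrans, rankOne, bvec, vecMulVec, Matrix.diagonal, Prod.ext_iff] <;>
    (try push_cast) <;> (try field_simp) <;>
      first
        | linear_combination -hsC
        | linear_combination hsC

/-- `A[a,b,c]` is PPT iff `a ≥ 1` and `bc ≥ 1`. -/
theorem stmt5 (a b c : ℝ) (ha : 0 ≤ a) (hb : 0 ≤ b) (hc : 0 ≤ c) :
    IsPPT (Amat a b c) ↔ 1 ≤ a ∧ 1 ≤ b * c := by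
  constructor
  · rintro ⟨hA, hG⟩
    have hc0 : ∀ t : ℝ, 0 ≤ c * t ^ 2 - 2 * t + b := by
      intro t
      have h2 := hG.dotProduct_mulVec_nonneg
        (fun p => if p = ((0:Fin 3),(1:Fin 3)) then (t:ℂ) else if p = (1,0) then -1 else 0)
      simp [Matrix.mulVec, dotProduct, Fintype.sum_prod_type, Fin.sum_univ_three, Amat, ptrans,
        Prod.ext_iff] at h2
      rw [show ((t:ℂ) * ((c:ℂ) * t + -1) + ((b:ℂ) + -(t:ℂ))) = (((c * t^2 - 2*t + b : ℝ)):ℂ) by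
        push_cast; ring] at h2
      rw [← Complex.ofReal_zero, Complex.real_le_real] at h2
      exact h2
    constructor
    · have h2 := hA.dotProduct_mulVec_nonneg
        (fun p => if p = ((0:Fin 3),(0:Fin 3)) then 1 else if p = (1,1) then -1 else 0)
      simp [Matrix.mulVec, dotProduct, Fintype.sum_prod_type, Fin.sum_univ_three, Amat,
        Prod.ext_iff] at h2
      rw [show ((a:ℂ) + -1 + ((a:ℂ) + -1)) = (((2*a - 2 : ℝ)):ℂ) by push_cast; ring] at h2
      rw [← Complex.ofReal_zero, Complex.real_le_real] at h2
      linarith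
    · rcases eq_or_lt_of_le hc with hcz | hcz
      · have := hc0 (b / 2 + 1); nlinarith
      · have := hc0 c⁻¹
        nlinarith [mul_nonneg hcz.le this, mul_inv_cancel₀ (ne_of_gt hcz)]
  · rintro ⟨ha1, hbc⟩
    have hcz : 0 < c := by
      rcases eq_or_lt_of_le hc with hcz | hcz
      · exfalso; rw [← hcz, mul_zero] at hbc; linarith
      · exact hcz
    have hbci : 0 ≤ b - c⁻¹ := by
      rw [sub_nonneg, inv_le_iff_one_le_mul₀' hcz]
      exact mul_comm b c ▸ hbc
    constructor
    · rw [Amat_decomp a b c]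
      refine (Matrix.PosSemidef.diagonal ?_).add (rankOne_posSemidef' _)
      intro p
      simp only [Pi.zero_apply]
      split_ifs
      · exact ofReal_nonneg' (by linarith)
      · exact ofReal_nonneg' hc
      · exact ofReal_nonneg' hb
    · rw [show ptrans (Amat a b c) = _ from ptrans_Amat_decomp a b c hcz]
      refine (((Matrix.PosSemidef.diagonal ?_).add (rankOne_posSemidef' _)).add
        (rankOne_posSemidef' _)).add (rankOne_posSemidef' _)
      intro p
      simp only [Pi.zero_apply]
      split_ifs
      · exact ofReal_nonneg' ha
      · norm_num
      · exact ofReal_nonneg' hbci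
end
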